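/- Let K and F be Cantor sets in ℝ, each admitting a slow subdivision satisfying the gap condition, and satisfying the pairwise size condition. Fix x ∈ [min K + min F, max K + max F]. Then there exist decreasing sequences of closed intervals (Kᵢ) and (Fᵢ), with Kᵢ an interval of some level of the subdivision of K and Fᵢ of the subdivision of F, whose lengths tend to zero, such that x ∈ Kᵢ + Fᵢ for all i; consequently x = k + f for some k ∈ K, f ∈ F. -/

import Mathlib

open Set

/-- A Cantor set in `ℝ`: a nonempty, compact, perfect, totally disconnected subset. -/
def IsCantorSet (K : Set ℝ) : Prop :=
  K.Nonempty ∧ IsCompact K ∧ Perfect K ∧ IsTotallyDisconnected K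

/-- A hole of a Cantor set `K`: a bounded connected component `(u,v)` of the complement
of `K` inside `[min K, max K]`; its endpoints lie in `K`. -/
def IsHole (K : Set ℝ) (u v : ℝ) : Prop :=
  u < v ∧ u ∈ K ∧ v ∈ K ∧ Set.Ioo u v ∩ K = ∅

/-- A slow subdivision of a Cantor set `K`: a decreasing family `level n` of closed
sets, each a finite disjoint union of closed intervals, starting from
`[min K, max K]`, where at step `n` one connected component `[A n, D n]` of `level n`
is split by removing the open hole `(B n, C n)` (leaving the two nonempty closed
intervals `K^L = [A n, B n]` and `K^R = [C n, D n]`), and with `⋂ n, level n = K`. -/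
structure SlowSubdivision (K : Set ℝ) where
  A : ℕ → ℝ
  B : ℕ → ℝ
  C : ℕ → ℝ
  D : ℕ → ℝ
  hAB : ∀ n, A n ≤ B n
  hBC : ∀ n, B n < C n
  hCD : ∀ n, C n ≤ D n
  level : ℕ → Set ℝ
  level_zero : level 0 = Set.Icc (sInf K) (sSup K)
  /-- `[A n, D n]` is a connected component of `level n`. -/
  comp : ∀ n, Set.Icc (A n) (D n) = connectedComponentIn (level n) (A n)
  level_succ : ∀ n, level (n + 1) = level n \ Set.Ioo (B n) (C n)
  inter_eq : ⋂ n, level n = K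

/-- The gap condition: each removed hole is strictly shorter than both adjacent
remaining closed intervals. -/
def SlowSubdivision.GapCondition {K : Set ℝ} (s : SlowSubdivision K) : Prop :=
  ∀ n, s.C n - s.B n < s.B n - s.A n ∧ s.C n - s.B n < s.D n - s.C n

/-- A slow subdivision is monotone if the removed holes are ordered by
non-increasing length. -/
def SlowSubdivision.IsMonotone {K : Set ℝ} (s : SlowSubdivision K) : Prop :=
  ∀ n, s.C (n + 1) - s.B (n + 1) ≤ s.C n - s.B n

namespace Hall

variable {M : Set ℝ} (s : SlowSubdivision M)

lemma level_antitone : Antitone s.level := by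
  apply antitone_nat_of_succ_le
  intro n
  rw [s.level_succ]
  exact diff_subset

lemma subset_level (n : ℕ) : M ⊆ s.level n := by
  intro y hy
  rw [← s.inter_eq] at hy
  exact mem_iInter.1 hy n

lemma level_subset_Icc (n : ℕ) : s.level n ⊆ Icc (sInf M) (sSup M) := by
  intro y hy
  have := level_antitone s (Nat.zero_le n) hy
  rwa [s.level_zero] at this

lemma Icc_eq_ends {a d a' d' : ℝ} (had : a ≤ d) (h : Icc a d = Icc a' d') :
    a = a' ∧ d = d' := by
  have h2 : a ∈ Icc a' d' := by rw [← h]; exact ⟨le_refl _, had⟩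
  have h3 : d ∈ Icc a' d' := by rw [← h]; exact ⟨had, le_refl _⟩
  have h1 : a' ∈ Icc a d := by rw [h]; exact ⟨le_refl _, h2.1.trans h2.2⟩
  have h4 : d' ∈ Icc a d := by rw [h]; exact ⟨h2.1.trans h2.2, le_refl _⟩
  exact ⟨le_antisymm h1.1 h2.1, le_antisymm h3.2 h4.2⟩

-- a closed interval which is a connected component: membership facts
lemma comp_base_mem {a d : ℝ} {n : ℕ} (had : a ≤ d)
    (hI : Icc a d = connectedComponentIn (s.level n) a) : a ∈ s.level n := by
  have : a ∈ Icc a d := ⟨le_refl _, had⟩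
  rw [hI] at this
  exact connectedComponentIn_subset _ _ this

lemma comp_of_mem {a d y : ℝ} {n : ℕ}
    (hI : Icc a d = connectedComponentIn (s.level n) a) (hy : y ∈ Icc a d) :
    Icc a d = connectedComponentIn (s.level n) y := by
  rw [hI]
  exact connectedComponentIn_eq (by rw [← hI]; exact hy)

lemma comp_subset_level {a d : ℝ} {n : ℕ}
    (hI : Icc a d = connectedComponentIn (s.level n) a) : Icc a d ⊆ s.level n := by
  rw [hI]; exact connectedComponentIn_subset _ _

/-- Endpoints of a component persist in all future levels. -/
lemma endpoints_mem_level {a d : ℝ} {n : ℕ} (had : a ≤ d)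
    (hI : Icc a d = connectedComponentIn (s.level n) a) :
    ∀ m, a ∈ s.level m ∧ d ∈ s.level m := by
  have key : ∀ j, a ∈ s.level (n + j) ∧ d ∈ s.level (n + j) := by
    intro j
    induction j with
    | zero =>
      constructor
      · exact comp_base_mem s had hI
      · exact comp_subset_level s hI ⟨had, le_refl _⟩
    | succ j ih =>
      have hsub : s.level (n + j) ⊆ s.level n := level_antitone s (Nat.le_add_right n j)
      have hcompsub : connectedComponentIn (s.level (n + j)) a ⊆ Icc a d := by
        rw [hI]; exact connectedComponentIn_mono a hsub
      have hcompsubd : connectedComponentIn (s.level (n + j)) d ⊆ Icc a d := by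
        rw [comp_of_mem s hI ⟨had, le_refl _⟩]
        exact connectedComponentIn_mono d hsub
      rw [show n + (j+1) = (n+j) + 1 from rfl, s.level_succ]
      set N := n + j
      constructor
      · refine ⟨ih.1, ?_⟩
        intro hmem
        have haAD : a ∈ Icc (s.A N) (s.D N) :=
          ⟨(s.hAB N).trans hmem.1.le, hmem.2.le.trans (s.hCD N)⟩
        have h1 : Icc (s.A N) (s.D N) = connectedComponentIn (s.level N) a :=
          comp_of_mem s (s.comp N) haAD
        have : Icc (s.A N) (s.D N) ⊆ Icc a d := by
          rw [h1]; exact hcompsub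
        have hA : a ≤ s.A N := ((Icc_subset_Icc_iff ((s.hAB N).trans ((s.hBC N).le.trans (s.hCD N)))).1 this).1
        linarith [s.hAB N, hmem.1]
      · refine ⟨ih.2, ?_⟩
        intro hmem
        have hdAD : d ∈ Icc (s.A N) (s.D N) :=
          ⟨(s.hAB N).trans hmem.1.le, hmem.2.le.trans (s.hCD N)⟩
        have h1 : Icc (s.A N) (s.D N) = connectedComponentIn (s.level N) d :=
          comp_of_mem s (s.comp N) hdAD
        have : Icc (s.A N) (s.D N) ⊆ Icc a d := by
          rw [h1]; exact hcompsubd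
        have hD : s.D N ≤ d := ((Icc_subset_Icc_iff ((s.hAB N).trans ((s.hBC N).le.trans (s.hCD N)))).1 this).2
        linarith [s.hCD N, hmem.2]
  intro m
  rcases le_or_gt m n with h | h
  · have := level_antitone s h
    exact ⟨this (comp_base_mem s had hI), this (comp_subset_level s hI ⟨had, le_refl _⟩)⟩
  · obtain ⟨j, rfl⟩ := Nat.exists_eq_add_of_le h.le
    exact key j

lemma endpoints_mem {a d : ℝ} {n : ℕ} (had : a ≤ d)
    (hI : Icc a d = connectedComponentIn (s.level n) a) : a ∈ M ∧ d ∈ M := by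
  constructor <;> [rw [← s.inter_eq]; rw [← s.inter_eq]] <;> rw [mem_iInter] <;>
    intro m
  · exact (endpoints_mem_level s had hI m).1
  · exact (endpoints_mem_level s had hI m).2

lemma ioo_disjoint_level (j : ℕ) : Ioo (s.B j) (s.C j) ∩ s.level (j+1) = ∅ := by
  rw [s.level_succ]
  ext y
  simp only [mem_inter_iff, mem_diff, mem_empty_iff_false, iff_false]
  rintro ⟨h1, _, h3⟩
  exact h3 h1

/-- After removing the hole at step `j`, the left part is a component. -/
lemma comp_split_left (j : ℕ) :
    Icc (s.A j) (s.B j) = connectedComponentIn (s.level (j+1)) (s.A j) := by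
  have hsub : Icc (s.A j) (s.B j) ⊆ s.level (j+1) := by
    intro y hy
    rw [s.level_succ]
    refine ⟨comp_subset_level s (s.comp j) ⟨hy.1, hy.2.trans ((s.hBC j).le.trans (s.hCD j))⟩, ?_⟩
    intro hmem
    exact absurd hy.2 (not_le.2 hmem.1)
  apply le_antisymm
  · exact isPreconnected_Icc.subset_connectedComponentIn ⟨le_refl _, s.hAB j⟩ hsub
  · intro y hy
    have hy1 : y ∈ s.level (j+1) := connectedComponentIn_subset _ _ hy
    have hy2 : y ∈ Icc (s.A j) (s.D j) := by
      rw [s.comp j]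
      exact connectedComponentIn_mono _ (by rw [s.level_succ]; exact diff_subset) hy
    refine ⟨hy2.1, ?_⟩
    by_contra hlt
    push_neg at hlt
    -- y > B j
    have hord : OrdConnected (connectedComponentIn (s.level (j+1)) (s.A j)) :=
      isPreconnected_connectedComponentIn.ordConnected
    rcases lt_or_ge y (s.C j) with h | h
    · have : y ∈ Ioo (s.B j) (s.C j) ∩ s.level (j+1) := ⟨⟨hlt, h⟩, hy1⟩
      rw [ioo_disjoint_level] at this
      exact this
    · set w := (s.B j + s.C j) / 2 with hw
      have hwmem : w ∈ Ioo (s.B j) (s.C j) := ⟨by simp [hw]; linarith [s.hBC j], by simp [hw]; linarith [s.hBC j]⟩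
      have hAmem : s.A j ∈ connectedComponentIn (s.level (j+1)) (s.A j) := by
        apply mem_connectedComponentIn
        exact hsub ⟨le_refl _, s.hAB j⟩
      have : w ∈ connectedComponentIn (s.level (j+1)) (s.A j) := by
        apply hord.out hAmem hy
        exact ⟨(s.hAB j).trans hwmem.1.le, hwmem.2.le.trans h⟩
      have : w ∈ Ioo (s.B j) (s.C j) ∩ s.level (j+1) :=
        ⟨hwmem, connectedComponentIn_subset _ _ this⟩
      rw [ioo_disjoint_level] at this
      exact this

lemma comp_split_right (j : ℕ) :
    Icc (s.C j) (s.D j) = connectedComponentIn (s.level (j+1)) (s.C j) := by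
  have hsub : Icc (s.C j) (s.D j) ⊆ s.level (j+1) := by
    intro y hy
    rw [s.level_succ]
    refine ⟨comp_subset_level s (s.comp j) ⟨((s.hAB j).trans (s.hBC j).le).trans hy.1, hy.2⟩, ?_⟩
    intro hmem
    exact absurd hy.1 (not_le.2 hmem.2)
  apply le_antisymm
  · exact isPreconnected_Icc.subset_connectedComponentIn ⟨le_refl _, s.hCD j⟩ hsub
  · intro y hy
    have hy1 : y ∈ s.level (j+1) := connectedComponentIn_subset _ _ hy
    have hy2 : y ∈ Icc (s.A j) (s.D j) := by
      have hCmem : s.C j ∈ Icc (s.A j) (s.D j) := ⟨(s.hAB j).trans (s.hBC j).le, s.hCD j⟩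
      rw [comp_of_mem s (s.comp j) hCmem]
      exact connectedComponentIn_mono _ (by rw [s.level_succ]; exact diff_subset) hy
    refine ⟨?_, hy2.2⟩
    by_contra hlt
    push_neg at hlt
    have hord : OrdConnected (connectedComponentIn (s.level (j+1)) (s.C j)) :=
      isPreconnected_connectedComponentIn.ordConnected
    rcases lt_or_ge (s.B j) y with h | h
    · have : y ∈ Ioo (s.B j) (s.C j) ∩ s.level (j+1) := ⟨⟨h, hlt⟩, hy1⟩
      rw [ioo_disjoint_level] at this
      exact this
    · set w := (s.B j + s.C j) / 2 with hw
      have hwmem : w ∈ Ioo (s.B j) (s.C j) := ⟨by simp [hw]; linarith [s.hBC j], by simp [hw]; linarith [s.hBC j]⟩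
      have hCmem : s.C j ∈ connectedComponentIn (s.level (j+1)) (s.C j) := by
        apply mem_connectedComponentIn
        exact hsub ⟨le_refl _, s.hCD j⟩
      have : w ∈ connectedComponentIn (s.level (j+1)) (s.C j) := by
        apply hord.out hy hCmem
        exact ⟨h.trans hwmem.1.le, hwmem.2.le⟩
      have : w ∈ Ioo (s.B j) (s.C j) ∩ s.level (j+1) :=
        ⟨hwmem, connectedComponentIn_subset _ _ this⟩
      rw [ioo_disjoint_level] at this
      exact this

/-- Each removed interval is a hole of `M`. -/
lemma isHole_step (j : ℕ) : IsHole M (s.B j) (s.C j) := by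
  refine ⟨s.hBC j, ?_, ?_, ?_⟩
  · exact (endpoints_mem s (s.hAB j) (comp_split_left s j)).2
  · exact (endpoints_mem s (s.hCD j) (comp_split_right s j)).1
  · have := ioo_disjoint_level s j
    apply subset_empty_iff.1
    rw [← this]
    exact inter_subset_inter_right _ (subset_level s (j+1))

/-- Every hole of `M` is one of the removed intervals. -/
lemma hole_eq_step {u v : ℝ} (h : IsHole M u v) : ∃ j, u = s.B j ∧ v = s.C j := by
  obtain ⟨huv, hu, hv, hdisj⟩ := h
  set w := (u + v) / 2 with hwdef
  have hw : w ∈ Ioo u v := ⟨by simp [hwdef]; linarith, by simp [hwdef]; linarith⟩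
  have hwM : w ∉ M := fun hmem => by
    have : w ∈ Ioo u v ∩ M := ⟨hw, hmem⟩
    rw [hdisj] at this; exact this
  have hex : ∃ m, w ∉ s.level m := by
    by_contra hc
    push_neg at hc
    exact hwM (by rw [← s.inter_eq]; exact mem_iInter.2 hc)
  classical
  set m₀ := Nat.find hex with hm₀
  have hnot : w ∉ s.level m₀ := Nat.find_spec hex
  have hm0pos : m₀ ≠ 0 := by
    intro h0
    apply hnot
    rw [h0, s.level_zero]
    have h1 := level_subset_Icc s 0 (subset_level s 0 hu)
    have h2 := level_subset_Icc s 0 (subset_level s 0 hv)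
    exact ⟨h1.1.trans hw.1.le, hw.2.le.trans h2.2⟩
  obtain ⟨j, hj⟩ := Nat.exists_eq_succ_of_ne_zero hm0pos
  have hwj : w ∈ s.level j := by
    by_contra hc
    exact (Nat.find_min hex (by omega : j < m₀)) hc
  have hwIoo : w ∈ Ioo (s.B j) (s.C j) := by
    by_contra hc
    apply hnot
    rw [hj, s.level_succ]
    exact ⟨hwj, hc⟩
  -- now identify endpoints
  obtain ⟨hBC, hBM, hCM, hBCdisj⟩ := isHole_step s j
  have hBu : s.B j ≤ u := by
    by_contra hc
    push_neg at hc
    have : s.B j ∈ Ioo u v ∩ M := ⟨⟨hc, hwIoo.1.trans hw.2⟩, hBM⟩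
    rw [hdisj] at this; exact this
  have huB : u ≤ s.B j := by
    by_contra hc
    push_neg at hc
    have : u ∈ Ioo (s.B j) (s.C j) ∩ M := ⟨⟨hc, hw.1.trans hwIoo.2⟩, hu⟩
    rw [hBCdisj] at this; exact this
  have hCv : v ≤ s.C j := by
    by_contra hc
    push_neg at hc
    have : s.C j ∈ Ioo u v ∩ M := ⟨⟨hw.1.trans hwIoo.2, hc⟩, hCM⟩
    rw [hdisj] at this; exact this
  have hvC : s.C j ≤ v := by
    by_contra hc
    push_neg at hc
    have : v ∈ Ioo (s.B j) (s.C j) ∩ M := ⟨⟨hBu.trans_lt huv, hc⟩, hv⟩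
    rw [hBCdisj] at this; exact this
  exact ⟨j, le_antisymm huB hBu, le_antisymm hCv hvC⟩

/-- A hole contained in a component gives gap bounds (needs the gap condition). -/
lemma hole_gap_bounds (hs : s.GapCondition) {p q u v : ℝ} {m : ℕ} (hpq : p ≤ q)
    (hI : Icc p q = connectedComponentIn (s.level m) p)
    (h : IsHole M u v) (hu : p ≤ u) (hv : v ≤ q) :
    v - u < u - p ∧ v - u < q - v := by
  obtain ⟨j, rfl, rfl⟩ := hole_eq_step s h
  have hBC := s.hBC j
  -- m ≤ j
  have hmj : m ≤ j := by
    by_contra hc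
    push_neg at hc
    have hsub : Icc p q ⊆ s.level (j+1) :=
      (comp_subset_level s hI).trans (level_antitone s (by omega))
    have : (s.B j + s.C j) / 2 ∈ Ioo (s.B j) (s.C j) ∩ s.level (j+1) := by
      refine ⟨⟨by linarith, by linarith⟩, hsub ⟨by linarith, by linarith⟩⟩
    rw [ioo_disjoint_level] at this
    exact this
  -- the component of the hole at step j is inside [p,q]
  have hBmem : s.B j ∈ Icc p q := ⟨hu, hBC.le.trans hv⟩
  have h1 : Icc p q = connectedComponentIn (s.level m) (s.B j) := comp_of_mem s hI hBmem
  have h2 : Icc (s.A j) (s.D j) = connectedComponentIn (s.level j) (s.B j) :=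
    comp_of_mem s (s.comp j) ⟨s.hAB j, hBC.le.trans (s.hCD j)⟩
  have hsub : Icc (s.A j) (s.D j) ⊆ Icc p q := by
    rw [h1, h2]
    exact connectedComponentIn_mono _ (level_antitone s hmj)
  have hAD : s.A j ≤ s.D j := (s.hAB j).trans (hBC.le.trans (s.hCD j))
  have := (Icc_subset_Icc_iff hAD).1 hsub
  have hgap := hs j
  exact ⟨by linarith [hgap.1, this.1], by linarith [hgap.2, this.2]⟩

/-- Of two separated holes, the one removed later is shorter than the bridge between them. -/
lemma later_hole_short (hs : s.GapCondition) {u v u' v' : ℝ}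
    (h1 : IsHole M u v) (h2 : IsHole M u' v') (hsep : v ≤ u') :
    v - u < u' - v ∨ v' - u' < u' - v := by
  obtain ⟨j, rfl, rfl⟩ := hole_eq_step s h1
  obtain ⟨j', rfl, rfl⟩ := hole_eq_step s h2
  have hBC := s.hBC j
  have hBC' := s.hBC j'
  have hne : j ≠ j' := by
    intro h
    subst h
    linarith
  rcases lt_or_gt_of_ne hne with hlt | hgt
  · -- j < j' : second hole removed later, show v' - u' < u' - v
    right
    have hA : s.C j ≤ s.A j' := by
      by_contra hc
      push_neg at hc
      have hAlev : s.A j' ∈ s.level (j+1) :=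
        (level_antitone s (by omega)) (comp_subset_level s (s.comp j') ⟨le_refl _, (s.hAB j').trans (hBC'.le.trans (s.hCD j'))⟩)
      have hAnotIoo : s.A j' ∉ Ioo (s.B j) (s.C j) := by
        intro hmem
        have : s.A j' ∈ Ioo (s.B j) (s.C j) ∩ s.level (j+1) := ⟨hmem, hAlev⟩
        rw [ioo_disjoint_level] at this; exact this
      have hAle : s.A j' ≤ s.B j := by
        rcases lt_or_ge (s.B j) (s.A j') with h | h
        · exact absurd ⟨h, hc⟩ hAnotIoo
        · exact h
      -- then the midpoint of (B j, C j) is in [A j', D j'] ⊆ level j' ⊆ level (j+1)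
      set w := (s.B j + s.C j) / 2 with hw
      have hwIoo : w ∈ Ioo (s.B j) (s.C j) := ⟨by simp [hw]; linarith, by simp [hw]; linarith⟩
      have hwmem : w ∈ Icc (s.A j') (s.D j') :=
        ⟨hAle.trans hwIoo.1.le, by linarith [hwIoo.2, hsep, s.hAB j', hBC', s.hCD j']⟩
      have : w ∈ Ioo (s.B j) (s.C j) ∩ s.level (j+1) :=
        ⟨hwIoo, (level_antitone s (by omega)) (comp_subset_level s (s.comp j') hwmem)⟩
      rw [ioo_disjoint_level] at this; exact this
    have := (hs j').1
    linarith [s.hAB j']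
  · -- j' < j : first hole removed later, show v - u < u' - v
    left
    have hD : s.D j ≤ s.B j' := by
      by_contra hc
      push_neg at hc
      have hDlev : s.D j ∈ s.level (j'+1) :=
        (level_antitone s (by omega)) (comp_subset_level s (s.comp j) ⟨(s.hAB j).trans (hBC.le.trans (s.hCD j)), le_refl _⟩)
      have hDnotIoo : s.D j ∉ Ioo (s.B j') (s.C j') := by
        intro hmem
        have : s.D j ∈ Ioo (s.B j') (s.C j') ∩ s.level (j'+1) := ⟨hmem, hDlev⟩
        rw [ioo_disjoint_level] at this; exact this
      have hDge : s.C j' ≤ s.D j := by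
        rcases lt_or_ge (s.D j) (s.C j') with h | h
        · exact absurd ⟨hc, h⟩ hDnotIoo
        · exact h
      set w := (s.B j' + s.C j') / 2 with hw
      have hwIoo : w ∈ Ioo (s.B j') (s.C j') := ⟨by simp [hw]; linarith, by simp [hw]; linarith⟩
      have hwmem : w ∈ Icc (s.A j) (s.D j) := by
        constructor
        · have h1 : s.A j ≤ s.C j := (s.hAB j).trans hBC.le
          linarith [hwIoo.1]
        · exact hwIoo.2.le.trans hDge
      have : w ∈ Ioo (s.B j') (s.C j') ∩ s.level (j'+1) :=
        ⟨hwIoo, (level_antitone s (by omega)) (comp_subset_level s (s.comp j) hwmem)⟩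
      rw [ioo_disjoint_level] at this; exact this
    have := (hs j).2
    linarith [s.hCD j]

/-- If the hole removed at step `n` does not meet a component, the component survives. -/
lemma comp_step_disjoint {a d : ℝ} {n : ℕ} (had : a ≤ d)
    (hI : Icc a d = connectedComponentIn (s.level n) a)
    (hdis : Ioo (s.B n) (s.C n) ∩ Icc a d = ∅) :
    Icc a d = connectedComponentIn (s.level (n+1)) a := by
  have hsub : Icc a d ⊆ s.level (n+1) := by
    intro y hy
    rw [s.level_succ]
    refine ⟨comp_subset_level s hI hy, fun hmem => ?_⟩
    have : y ∈ Ioo (s.B n) (s.C n) ∩ Icc a d := ⟨hmem, hy⟩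
    rw [hdis] at this; exact this
  apply le_antisymm
  · exact isPreconnected_Icc.subset_connectedComponentIn ⟨le_refl _, had⟩ hsub
  · intro y hy
    rw [hI]
    exact connectedComponentIn_mono _ (by rw [s.level_succ]; exact diff_subset) hy

/-- If the hole removed at step `n` meets a component, the component is `[A n, D n]`. -/
lemma comp_step_meets {a d w : ℝ} {n : ℕ} (had : a ≤ d)
    (hI : Icc a d = connectedComponentIn (s.level n) a)
    (hw : w ∈ Ioo (s.B n) (s.C n) ∩ Icc a d) :
    a = s.A n ∧ d = s.D n := by
  have hwAD : w ∈ Icc (s.A n) (s.D n) :=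
    ⟨(s.hAB n).trans hw.1.1.le, hw.1.2.le.trans (s.hCD n)⟩
  have h1 : Icc (s.A n) (s.D n) = connectedComponentIn (s.level n) w :=
    comp_of_mem s (s.comp n) hwAD
  have h2 : Icc a d = connectedComponentIn (s.level n) w := comp_of_mem s hI hw.2
  exact Icc_eq_ends had (h2.trans h1.symm)

end Hall

namespace Hall

lemma holes_sep {M : Set ℝ} {u v u' v' : ℝ} (h1 : IsHole M u v) (h2 : IsHole M u' v')
    (hvv : v < v') : v ≤ u' := by
  obtain ⟨huv, hu, hv, hd⟩ := h1
  obtain ⟨huv', hu', hv', hd'⟩ := h2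
  by_contra hc
  push_neg at hc   -- u' < v
  have hu'u : u' ≤ u := by
    by_contra hcc
    push_neg at hcc
    have : u' ∈ Ioo u v ∩ M := ⟨⟨hcc, hc⟩, hu'⟩
    rw [hd] at this; exact this
  rcases eq_or_lt_of_le hu'u with heq | hlt
  · have : v ∈ Ioo u' v' ∩ M := ⟨⟨heq ▸ huv, hvv⟩, hv⟩
    rw [hd'] at this; exact this
  · have : u ∈ Ioo u' v' ∩ M := ⟨⟨hlt, huv.trans hvv⟩, hu⟩
    rw [hd'] at this; exact this

variable {K F : Set ℝ} (sK : SlowSubdivision K) (sF : SlowSubdivision F) (x : ℝ)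

structure Config (sK : SlowSubdivision K) (sF : SlowSubdivision F) (x : ℝ) where
  n : ℕ
  m : ℕ
  a : ℝ
  d : ℝ
  p : ℝ
  q : ℝ
  had : a ≤ d
  hpq : p ≤ q
  hI : Icc a d = connectedComponentIn (sK.level n) a
  hJ : Icc p q = connectedComponentIn (sF.level m) p
  hx1 : a + p ≤ x
  hx2 : x ≤ d + q
  hN2 : ∀ u v, IsHole F u v → p ≤ u → v ≤ q → a ≤ x - v ∨ x - u ≤ d
  hN3 : ∀ u v, IsHole K u v → a ≤ u → v ≤ d → x - q ≤ u ∨ v ≤ x - p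

/-- Symmetry of configurations. -/
def Config.swap (c : Config sK sF x) : Config sF sK x where
  n := c.m
  m := c.n
  a := c.p
  d := c.q
  p := c.a
  q := c.d
  had := c.hpq
  hpq := c.had
  hI := c.hJ
  hJ := c.hI
  hx1 := by linarith [c.hx1]
  hx2 := by linarith [c.hx2]
  hN2 := by
    intro u v h hu hv
    rcases c.hN3 u v h hu hv with h' | h'
    · right; linarith
    · left; linarith
  hN3 := by
    intro u v h hu hv
    rcases c.hN2 u v h hu hv with h' | h'
    · right; linarith
    · left; linarith

/-- The key step: the K-side level may always be advanced. -/
lemma stepK (hsK : sK.GapCondition) (hsF : sF.GapCondition) (c : Config sK sF x) :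
    ∃ c' : Config sK sF x, c'.n = c.n + 1 ∧ c'.m = c.m ∧
      c.a ≤ c'.a ∧ c'.d ≤ c.d ∧ c'.p = c.p ∧ c'.q = c.q := by
  classical
  obtain ⟨n, m, a, d, p, q, had, hpq, hI, hJ, hx1, hx2, hN2, hN3⟩ := c
  by_cases hdis : Ioo (sK.B n) (sK.C n) ∩ Icc a d = ∅
  · exact ⟨⟨n+1, m, a, d, p, q, had, hpq, comp_step_disjoint sK had hI hdis, hJ,
      hx1, hx2, hN2, hN3⟩, rfl, rfl, le_refl _, le_refl _, rfl, rfl⟩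
  · obtain ⟨w, hw⟩ := nonempty_iff_ne_empty.2 hdis
    obtain ⟨haA, hdD⟩ := comp_step_meets sK had hI hw
    set B := sK.B n with hBdef
    set C := sK.C n with hCdef
    have haB : a ≤ B := haA ▸ sK.hAB n
    have hBC : B < C := sK.hBC n
    have hCd : C ≤ d := hdD ▸ sK.hCD n
    have hgap1 : C - B < B - a := haA ▸ (hsK n).1
    have hgap2 : C - B < d - C := hdD ▸ (hsK n).2
    have holeBC : IsHole K B C := isHole_step sK n
    have hD1 : x - q ≤ B ∨ C ≤ x - p := hN3 B C holeBC haB hCd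
    have hIL : Icc a B = connectedComponentIn (sK.level (n+1)) a := by
      rw [haA]; exact haA ▸ comp_split_left sK n
    have hIR : Icc C d = connectedComponentIn (sK.level (n+1)) C := by
      rw [hdD]; exact comp_split_right sK n
    -- the two possible new configurations
    have mkL : x ≤ B + q →
        (∀ u v, IsHole F u v → p ≤ u → v ≤ q → a ≤ x - v ∨ x - u ≤ B) →
        ∃ c' : Config sK sF x, c'.n = n + 1 ∧ c'.m = m ∧
          a ≤ c'.a ∧ c'.d ≤ d ∧ c'.p = p ∧ c'.q = q := by
      intro hv hf
      have hN3' : ∀ u v, IsHole K u v → a ≤ u → v ≤ B → x - q ≤ u ∨ v ≤ x - p := by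
        intro u v h hu hvB
        exact hN3 u v h hu (by linarith)
      exact ⟨⟨n+1, m, a, B, p, q, haB, hpq, hIL, hJ, hx1, hv, hf, hN3'⟩,
        rfl, rfl, le_refl _, by linarith, rfl, rfl⟩
    have mkR : C + p ≤ x →
        (∀ u v, IsHole F u v → p ≤ u → v ≤ q → C ≤ x - v ∨ x - u ≤ d) →
        ∃ c' : Config sK sF x, c'.n = n + 1 ∧ c'.m = m ∧
          a ≤ c'.a ∧ c'.d ≤ d ∧ c'.p = p ∧ c'.q = q := by
      intro hv hf
      have hN3' : ∀ u v, IsHole K u v → C ≤ u → v ≤ d → x - q ≤ u ∨ v ≤ x - p := by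
        intro u v h hCu hvd
        exact hN3 u v h (by linarith) hvd
      exact ⟨⟨n+1, m, C, d, p, q, hCd, hpq, hIR, hJ, hv, hx2, hf, hN3'⟩,
        rfl, rfl, by linarith, le_refl _, rfl, rfl⟩
    -- forbidden-ness predicates
    by_cases hLf : ∀ u v, IsHole F u v → p ≤ u → v ≤ q → a ≤ x - v ∨ x - u ≤ B
    · by_cases hLv : x ≤ B + q
      · exact mkL hLv hLf
      · -- L invalid, so R must be valid and unforbidden
        push_neg at hLv
        apply mkR (by rcases hD1 with h | h <;> linarith)
        -- claim C1: R cannot be forbidden when L is invalid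
        intro u v h hu hv
        by_contra hc
        push_neg at hc
        obtain ⟨hg1, hg2⟩ := hc   -- x - v < C (¬ C ≤ x-v) , d < x - u
        have hN2' := hN2 u v h hu hv
        have hg1a : a ≤ x - v := by rcases hN2' with h' | h' <;> linarith
        have hgaps := hole_gap_bounds sF hsF hpq hJ h hu hv
        -- v-u < u-p and v-u < q-v ; contradiction
        linarith [hgaps.2]
    · -- L forbidden: R must be valid and unforbidden
      push_neg at hLf
      obtain ⟨u', v', h', hu', hv', hLfa, hLfb⟩ := hLf
      -- hLfa : ¬ (a ≤ x - v') i.e. x - v' < a ; hLfb : ¬ (x - u' ≤ B)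
      have hg1' : x - v' < a := by linarith
      have hg2' : B < x - u' := by linarith
      have hg2'd : x - u' ≤ d := by
        rcases hN2 u' v' h' hu' hv' with h'' | h'' <;> linarith
      have hgaps' := hole_gap_bounds sF hsF hpq hJ h' hu' hv'
      -- claim C2 : R is valid
      have hRv : C + p ≤ x := by
        by_contra hc
        push_neg at hc
        linarith [hgaps'.1]
      apply mkR hRv
      -- claim C3 : R not forbidden
      intro u v h hu hv
      by_contra hc
      push_neg at hc
      obtain ⟨hg1, hg2⟩ := hc
      have hg1a : a ≤ x - v := by
        rcases hN2 u v h hu hv with h'' | h'' <;> linarith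
      have hgaps := hole_gap_bounds sF hsF hpq hJ h hu hv
      -- order the two holes : v < v'
      have hvv : v < v' := by linarith
      have hsep : v ≤ u' := holes_sep h h' hvv
      rcases later_hole_short sF hsF h h' hsep with hlate | hlate
      · linarith
      · linarith
  done

end Hall

namespace Hall

variable {K F : Set ℝ} {sK : SlowSubdivision K} {sF : SlowSubdivision F} {x : ℝ}

lemma stepF (hsK : sK.GapCondition) (hsF : sF.GapCondition) (c : Config sK sF x) :
    ∃ c' : Config sK sF x, c'.m = c.m + 1 ∧ c'.n = c.n ∧
      c.p ≤ c'.p ∧ c'.q ≤ c.q ∧ c'.a = c.a ∧ c'.d = c.d := by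
  obtain ⟨c', h1, h2, h3, h4, h5, h6⟩ := stepK sF sK x hsF hsK (c.swap)
  exact ⟨c'.swap, h1, h2, h3, h4, h5, h6⟩

lemma level_isClosed {M : Set ℝ} (s : SlowSubdivision M) (n : ℕ) : IsClosed (s.level n) := by
  induction n with
  | zero => rw [s.level_zero]; exact isClosed_Icc
  | succ n ih => rw [s.level_succ]; exact ih.sdiff isOpen_Ioo

lemma comp_of_mem' {M : Set ℝ} (s : SlowSubdivision M) {a d y z : ℝ} {n : ℕ}
    (hI : Icc a d = connectedComponentIn (s.level n) y) (hz : z ∈ Icc a d) :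
    Icc a d = connectedComponentIn (s.level n) z := by
  rw [hI]
  exact connectedComponentIn_eq (by rw [← hI]; exact hz)

/-- Components of levels are closed intervals. -/
lemma comp_eq_Icc {M : Set ℝ} (s : SlowSubdivision M) {y : ℝ} {n : ℕ} (hy : y ∈ s.level n) :
    ∃ a d : ℝ, a ≤ d ∧ y ∈ Icc a d ∧ Icc a d = connectedComponentIn (s.level n) y := by
  set S := connectedComponentIn (s.level n) y with hS
  have hne : S.Nonempty := ⟨y, mem_connectedComponentIn hy⟩
  have hsub : S ⊆ Icc (sInf M) (sSup M) :=
    (connectedComponentIn_subset _ _).trans (level_subset_Icc s n)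
  have hbdd : BddBelow S := ⟨sInf M, fun z hz => (hsub hz).1⟩
  have hbdA : BddAbove S := ⟨sSup M, fun z hz => (hsub hz).2⟩
  have hclosed : IsClosed S := by
    have h1 : IsPreconnected (closure S) := isPreconnected_connectedComponentIn.closure
    have h2 : closure S ⊆ s.level n := by
      rw [← (level_isClosed s n).closure_eq]
      exact closure_mono (connectedComponentIn_subset _ _)
    have h3 : closure S ⊆ S :=
      h1.subset_connectedComponentIn (subset_closure (mem_connectedComponentIn hy)) h2
    exact isClosed_of_closure_subset h3
  have hord : OrdConnected S := isPreconnected_connectedComponentIn.ordConnected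
  refine ⟨sInf S, sSup S, ?_, ?_, ?_⟩
  · exact csInf_le_csSup hne hbdd hbdA
  · exact ⟨csInf_le hbdd (mem_connectedComponentIn hy), le_csSup hbdA (mem_connectedComponentIn hy)⟩
  · apply le_antisymm
    · intro z hz
      have h1 : sInf S ∈ S := hclosed.csInf_mem hne hbdd
      have h2 : sSup S ∈ S := hclosed.csSup_mem hne hbdA
      exact hord.out h1 h2 hz
    · intro z hz
      exact ⟨csInf_le hbdd hz, le_csSup hbdA hz⟩

/-- Part 3 helper: the nested component intervals around a point of `M`. -/
lemma point_sequences {M : Set ℝ} (hM : IsCantorSet M) (s : SlowSubdivision M)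
    {y : ℝ} (hy : y ∈ M) :
    ∃ p q : ℕ → ℝ, (∀ i, p i ≤ q i) ∧
      (∀ i, Icc (p (i+1)) (q (i+1)) ⊆ Icc (p i) (q i)) ∧
      (∀ i, Icc (p i) (q i) = connectedComponentIn (s.level i) (p i)) ∧
      Filter.Tendsto (fun i => q i - p i) Filter.atTop (nhds 0) ∧
      (∀ i, y ∈ Icc (p i) (q i)) := by
  have hex : ∀ i : ℕ, ∃ pq : ℝ × ℝ, pq.1 ≤ pq.2 ∧ y ∈ Icc pq.1 pq.2 ∧
      Icc pq.1 pq.2 = connectedComponentIn (s.level i) y := by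
    intro i
    obtain ⟨a, d, h1, h2, h3⟩ := comp_eq_Icc s (subset_level s i hy)
    exact ⟨(a, d), h1, h2, h3⟩
  choose pq hle hmem hcomp using hex
  set p : ℕ → ℝ := fun i => (pq i).1 with hp
  set q : ℕ → ℝ := fun i => (pq i).2 with hq
  have hnested : ∀ i, Icc (p (i+1)) (q (i+1)) ⊆ Icc (p i) (q i) := by
    intro i
    rw [hcomp i, hcomp (i+1)]
    exact connectedComponentIn_mono y (level_antitone s (Nat.le_succ i))
  have hpmono : Monotone p := by
    apply monotone_nat_of_le_succ
    intro i
    exact ((Icc_subset_Icc_iff (hle (i+1))).1 (hnested i)).1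
  have hqanti : Antitone q := by
    apply antitone_nat_of_succ_le
    intro i
    exact ((Icc_subset_Icc_iff (hle (i+1))).1 (hnested i)).2
  have hbq : BddAbove (Set.range p) := ⟨q 0, by rintro _ ⟨i, rfl⟩; exact (hmem i).1.trans ((hmem i).2.trans (hqanti (Nat.zero_le i)))⟩
  have hbp : BddBelow (Set.range q) := ⟨p 0, by rintro _ ⟨i, rfl⟩; exact (hpmono (Nat.zero_le i)).trans (hle i)⟩
  set y1 := ⨆ i, p i with hy1
  set y2 := ⨅ i, q i with hy2
  have hpy1 : ∀ i, p i ≤ y1 := fun i => le_ciSup hbq i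
  have hy2q : ∀ i, y2 ≤ q i := fun i => ciInf_le hbp i
  have hy1y : y1 ≤ y := ciSup_le fun i => (hmem i).1
  have hyy2 : y ≤ y2 := le_ciInf fun i => (hmem i).2
  have hsubM : Icc y1 y2 ⊆ M := by
    intro z hz
    rw [← s.inter_eq, mem_iInter]
    intro i
    apply show Icc (p i) (q i) ⊆ s.level i by
      rw [hcomp i]; exact connectedComponentIn_subset _ _
    exact ⟨(hpy1 i).trans hz.1 |>.trans (le_refl _) |>.trans (le_refl _) , hz.2.trans (hy2q i)⟩
  have heq : y1 = y2 := by
    have hsing := hM.2.2.2 (Icc y1 y2) hsubM isPreconnected_Icc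
    exact hsing ⟨le_refl _, hy1y.trans hyy2⟩ ⟨hy1y.trans hyy2, le_refl _⟩
  have hty1 : y1 = y := le_antisymm hy1y (heq ▸ hyy2)
  have htp : Filter.Tendsto p Filter.atTop (nhds y) := by
    rw [← hty1]; exact tendsto_atTop_ciSup hpmono hbq
  have htq : Filter.Tendsto q Filter.atTop (nhds y) := by
    have : y2 = y := le_antisymm (heq ▸ hy1y) hyy2
    rw [← this]; exact tendsto_atTop_ciInf hqanti hbp
  refine ⟨p, q, hle, hnested, ?_, ?_, hmem⟩
  · intro i
    exact comp_of_mem' s (hcomp i) ⟨le_refl _, hle i⟩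
  · have := htq.sub htp
    simpa using this

end Hall

namespace Hall

variable {K F : Set ℝ} {sK : SlowSubdivision K} {sF : SlowSubdivision F} {x : ℝ}

lemma comp_zero {M : Set ℝ} (s : SlowSubdivision M) (hne : M.Nonempty) (hcpt : IsCompact M) :
    Icc (sInf M) (sSup M) = connectedComponentIn (s.level 0) (sInf M) := by
  have hle : sInf M ≤ sSup M := csInf_le_csSup hne hcpt.bddBelow hcpt.bddAbove
  apply le_antisymm
  · apply isPreconnected_Icc.subset_connectedComponentIn ⟨le_refl _, hle⟩
    rw [s.level_zero]
  · rw [← s.level_zero] at *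
    exact connectedComponentIn_subset _ _

lemma exists_sum (hK : IsCantorSet K) (hF : IsCantorSet F)
    (hsK : sK.GapCondition) (hsF : sF.GapCondition)
    (hsize1 : ∀ u v : ℝ, IsHole F u v → v - u < sSup K - sInf K)
    (hsize2 : ∀ u v : ℝ, IsHole K u v → v - u < sSup F - sInf F)
    (hx : x ∈ Set.Icc (sInf K + sInf F) (sSup K + sSup F)) :
    ∃ k ∈ K, ∃ f ∈ F, x = k + f := by
  classical
  have hadK : sInf K ≤ sSup K := csInf_le_csSup hK.1 hK.2.1.bddBelow hK.2.1.bddAbove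
  have hadF : sInf F ≤ sSup F := csInf_le_csSup hF.1 hF.2.1.bddBelow hF.2.1.bddAbove
  set c0 : Config sK sF x :=
    { n := 0, m := 0, a := sInf K, d := sSup K, p := sInf F, q := sSup F,
      had := hadK, hpq := hadF,
      hI := comp_zero sK hK.1 hK.2.1,
      hJ := comp_zero sF hF.1 hF.2.1,
      hx1 := hx.1, hx2 := hx.2,
      hN2 := by
        intro u v h hu hv
        by_contra hc
        push_neg at hc
        have := hsize1 u v h
        linarith [hc.1, hc.2]
      hN3 := by
        intro u v h hu hv
        by_contra hc
        push_neg at hc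
        have := hsize2 u v h
        linarith [hc.1, hc.2] } with hc0
  set ch : ℕ → Config sK sF x := fun i =>
    Nat.rec c0 (fun i c => if Even i then (stepK sK sF x hsK hsF c).choose
                           else (stepF hsK hsF c).choose) i with hch
  have hchsucc : ∀ i, ch (i+1) = if Even i then (stepK sK sF x hsK hsF (ch i)).choose
      else (stepF hsK hsF (ch i)).choose := fun i => rfl
  have hstepE : ∀ i, Even i → (ch (i+1)).n = (ch i).n + 1 ∧ (ch (i+1)).m = (ch i).m ∧
      (ch i).a ≤ (ch (i+1)).a ∧ (ch (i+1)).d ≤ (ch i).d ∧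
      (ch (i+1)).p = (ch i).p ∧ (ch (i+1)).q = (ch i).q := by
    intro i hi
    rw [hchsucc i, if_pos hi]
    exact (stepK sK sF x hsK hsF (ch i)).choose_spec
  have hstepO : ∀ i, ¬ Even i → (ch (i+1)).m = (ch i).m + 1 ∧ (ch (i+1)).n = (ch i).n ∧
      (ch i).p ≤ (ch (i+1)).p ∧ (ch (i+1)).q ≤ (ch i).q ∧
      (ch (i+1)).a = (ch i).a ∧ (ch (i+1)).d = (ch i).d := by
    intro i hi
    rw [hchsucc i, if_neg hi]
    exact (stepF hsK hsF (ch i)).choose_spec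
  -- monotonicity of interval endpoints
  have haMono : Monotone fun i => (ch i).a := by
    apply monotone_nat_of_le_succ
    intro i
    by_cases hi : Even i
    · exact (hstepE i hi).2.2.1
    · exact le_of_eq ((hstepO i hi).2.2.2.2.1).symm
  have hdAnti : Antitone fun i => (ch i).d := by
    apply antitone_nat_of_succ_le
    intro i
    by_cases hi : Even i
    · exact (hstepE i hi).2.2.2.1
    · exact le_of_eq ((hstepO i hi).2.2.2.2.2)
  have hpMono : Monotone fun i => (ch i).p := by
    apply monotone_nat_of_le_succ
    intro i
    by_cases hi : Even i
    · exact le_of_eq ((hstepE i hi).2.2.2.2.1).symm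
    · exact (hstepO i hi).2.2.1
  have hqAnti : Antitone fun i => (ch i).q := by
    apply antitone_nat_of_succ_le
    intro i
    by_cases hi : Even i
    · exact le_of_eq ((hstepE i hi).2.2.2.2.2)
    · exact (hstepO i hi).2.2.2.1
  -- level growth
  have hlevels : ∀ t, t ≤ (ch (2*t)).n ∧ t ≤ (ch (2*t)).m := by
    intro t
    induction t with
    | zero => exact ⟨Nat.zero_le _, Nat.zero_le _⟩
    | succ t ih =>
      have h1 := hstepE (2*t) (even_two_mul t)
      have h2 := hstepO (2*t+1) (by simp [Nat.even_add_one, parity_simps])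
      have e1 : 2*(t+1) = (2*t+1)+1 := by ring
      constructor
      · rw [e1, h2.2.1, h1.1]; omega
      · rw [e1, h2.1, h1.2.1]; omega
  -- limits
  have hbdda : BddAbove (Set.range fun i => (ch i).a) :=
    ⟨(ch 0).d, by rintro _ ⟨i, rfl⟩; exact (ch i).had.trans (hdAnti (Nat.zero_le i))⟩
  have hbddp : BddAbove (Set.range fun i => (ch i).p) :=
    ⟨(ch 0).q, by rintro _ ⟨i, rfl⟩; exact (ch i).hpq.trans (hqAnti (Nat.zero_le i))⟩
  have hbddd : BddBelow (Set.range fun i => (ch i).d) :=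
    ⟨(ch 0).a, by rintro _ ⟨i, rfl⟩; exact (haMono (Nat.zero_le i)).trans (ch i).had⟩
  have hbddq : BddBelow (Set.range fun i => (ch i).q) :=
    ⟨(ch 0).p, by rintro _ ⟨i, rfl⟩; exact (hpMono (Nat.zero_le i)).trans (ch i).hpq⟩
  set k1 := ⨆ i, (ch i).a with hk1
  set k2 := ⨅ i, (ch i).d with hk2
  set f1 := ⨆ i, (ch i).p with hf1
  set f2 := ⨅ i, (ch i).q with hf2
  have hak1 : ∀ i, (ch i).a ≤ k1 := fun i => le_ciSup hbdda i
  have hk2d : ∀ i, k2 ≤ (ch i).d := fun i => ciInf_le hbddd i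
  have hpf1 : ∀ i, (ch i).p ≤ f1 := fun i => le_ciSup hbddp i
  have hf2q : ∀ i, f2 ≤ (ch i).q := fun i => ciInf_le hbddq i
  have hk12 : k1 ≤ k2 := by
    apply ciSup_le
    intro i
    apply le_ciInf
    intro j
    rcases le_total i j with h | h
    · exact (haMono h).trans (ch j).had
    · exact (ch i).had.trans (hdAnti h)
  have hf12 : f1 ≤ f2 := by
    apply ciSup_le
    intro i
    apply le_ciInf
    intro j
    rcases le_total i j with h | h
    · exact (hpMono h).trans (ch j).hpq
    · exact (ch i).hpq.trans (hqAnti h)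
  -- the limit intervals lie in K resp. F
  have hIccK : Icc k1 k2 ⊆ K := by
    intro z hz
    rw [← sK.inter_eq, mem_iInter]
    intro N
    have h1 : Icc (ch (2*N)).a (ch (2*N)).d ⊆ sK.level N := by
      refine (comp_subset_level sK (ch (2*N)).hI).trans (level_antitone sK (hlevels N).1)
    exact h1 ⟨(hak1 (2*N)).trans hz.1, hz.2.trans (hk2d (2*N))⟩
  have hIccF : Icc f1 f2 ⊆ F := by
    intro z hz
    rw [← sF.inter_eq, mem_iInter]
    intro N
    have h1 : Icc (ch (2*N)).p (ch (2*N)).q ⊆ sF.level N := by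
      refine (comp_subset_level sF (ch (2*N)).hJ).trans (level_antitone sF (hlevels N).2)
    exact h1 ⟨(hpf1 (2*N)).trans hz.1, hz.2.trans (hf2q (2*N))⟩
  have hkk : k1 = k2 := hK.2.2.2 (Icc k1 k2) hIccK isPreconnected_Icc
    ⟨le_refl _, hk12⟩ ⟨hk12, le_refl _⟩
  have hff : f1 = f2 := hF.2.2.2 (Icc f1 f2) hIccF isPreconnected_Icc
    ⟨le_refl _, hf12⟩ ⟨hf12, le_refl _⟩
  -- limits and equality
  have hta : Filter.Tendsto (fun i => (ch i).a) Filter.atTop (nhds k1) :=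
    tendsto_atTop_ciSup haMono hbdda
  have htd : Filter.Tendsto (fun i => (ch i).d) Filter.atTop (nhds k1) := by
    rw [hkk]; exact tendsto_atTop_ciInf hdAnti hbddd
  have htp : Filter.Tendsto (fun i => (ch i).p) Filter.atTop (nhds f1) :=
    tendsto_atTop_ciSup hpMono hbddp
  have htq : Filter.Tendsto (fun i => (ch i).q) Filter.atTop (nhds f1) := by
    rw [hff]; exact tendsto_atTop_ciInf hqAnti hbddq
  have hxle : k1 + f1 ≤ x :=
    le_of_tendsto (hta.add htp) (Filter.Eventually.of_forall fun i => (ch i).hx1)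
  have hxge : x ≤ k1 + f1 :=
    ge_of_tendsto (htd.add htq) (Filter.Eventually.of_forall fun i => (ch i).hx2)
  exact ⟨k1, hIccK ⟨le_refl _, hk12⟩, f1, hIccF ⟨le_refl _, hf12⟩,
    le_antisymm hxge hxle⟩

end Hall


open Pointwise Filter

/-- Let `K` and `F` be Cantor sets in `ℝ`, each with a slow
subdivision satisfying the gap condition, and satisfying the pairwise size condition.
Fix `x ∈ [min K + min F, max K + max F]`. Then there are decreasing sequences of
closed intervals `(Kᵢ) = ([p i, q i])` and `(Fᵢ) = ([p' i, q' i])`, each a connected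
component of some level of the respective subdivision, with lengths tending to `0`,
such that `x ∈ Kᵢ + Fᵢ` for all `i`; consequently `x = k + f` with `k ∈ K`, `f ∈ F`. -/
theorem hall_nested_intervals (K F : Set ℝ)
    (hK : IsCantorSet K) (hF : IsCantorSet F)
    (sK : SlowSubdivision K) (hsK : sK.GapCondition)
    (sF : SlowSubdivision F) (hsF : sF.GapCondition)
    (hsize1 : ∀ u v : ℝ, IsHole F u v → v - u < sSup K - sInf K)
    (hsize2 : ∀ u v : ℝ, IsHole K u v → v - u < sSup F - sInf F)
    (x : ℝ) (hx : x ∈ Set.Icc (sInf K + sInf F) (sSup K + sSup F)) :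
    ∃ p q p' q' : ℕ → ℝ,
      (∀ i, p i ≤ q i) ∧ (∀ i, p' i ≤ q' i) ∧
      (∀ i, Set.Icc (p (i + 1)) (q (i + 1)) ⊆ Set.Icc (p i) (q i)) ∧
      (∀ i, Set.Icc (p' (i + 1)) (q' (i + 1)) ⊆ Set.Icc (p' i) (q' i)) ∧
      (∀ i, ∃ n, Set.Icc (p i) (q i) = connectedComponentIn (sK.level n) (p i)) ∧
      (∀ i, ∃ n, Set.Icc (p' i) (q' i) = connectedComponentIn (sF.level n) (p' i)) ∧
      Tendsto (fun i => q i - p i) atTop (nhds 0) ∧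
      Tendsto (fun i => q' i - p' i) atTop (nhds 0) ∧
      (∀ i, x ∈ Set.Icc (p i) (q i) + Set.Icc (p' i) (q' i)) ∧
      ∃ k ∈ K, ∃ f ∈ F, x = k + f := by
  obtain ⟨k, hkK, f, hfF, hxkf⟩ :=
    Hall.exists_sum hK hF hsK hsF hsize1 hsize2 hx
  obtain ⟨p, q, h1, h2, h3, h4, h5⟩ := Hall.point_sequences hK sK hkK
  obtain ⟨p', q', h1', h2', h3', h4', h5'⟩ := Hall.point_sequences hF sF hfF
  refine ⟨p, q, p', q', h1, h1', h2, h2', fun i => ⟨i, h3 i⟩, fun i => ⟨i, h3' i⟩,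
    h4, h4', ?_, k, hkK, f, hfF, hxkf⟩
  intro i
  rw [hxkf]
  exact Set.add_mem_add (h5 i) (h5' i)
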